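/- The square of the Fischer–Burmeister function, (a,b) ↦ (√(a² + b²) − a − b)², is continuously differentiable on ℝ². -/

import Mathlib

open Real Filter

noncomputable def NN (p : ℝ × ℝ) : ℝ := Real.sqrt (p.1 ^ 2 + p.2 ^ 2)

noncomputable def hh (p : ℝ × ℝ) : ℝ := (p.1 + p.2) * NN p

noncomputable def c1 (p : ℝ × ℝ) : ℝ := NN p + (p.1 + p.2) * p.1 / NN p
noncomputable def c2 (p : ℝ × ℝ) : ℝ := NN p + (p.1 + p.2) * p.2 / NN p

noncomputable def hh' (p : ℝ × ℝ) : ℝ × ℝ →L[ℝ] ℝ :=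
  c1 p • ContinuousLinearMap.fst ℝ ℝ ℝ + c2 p • ContinuousLinearMap.snd ℝ ℝ ℝ

lemma NN_nonneg (p : ℝ × ℝ) : 0 ≤ NN p := Real.sqrt_nonneg _

lemma NN_cont : Continuous NN :=
  Real.continuous_sqrt.comp (((continuous_fst.pow 2).add (continuous_snd.pow 2)))

lemma abs_fst_le (p : ℝ × ℝ) : |p.1| ≤ NN p := by
  rw [show |p.1| = Real.sqrt (p.1 ^ 2) by rw [Real.sqrt_sq_eq_abs]]
  exact Real.sqrt_le_sqrt (by nlinarith [sq_nonneg p.2])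

lemma abs_snd_le (p : ℝ × ℝ) : |p.2| ≤ NN p := by
  rw [show |p.2| = Real.sqrt (p.2 ^ 2) by rw [Real.sqrt_sq_eq_abs]]
  exact Real.sqrt_le_sqrt (by nlinarith [sq_nonneg p.1])

lemma NN_le (p : ℝ × ℝ) : NN p ≤ |p.1| + |p.2| := by
  have h : p.1 ^ 2 + p.2 ^ 2 ≤ (|p.1| + |p.2|) ^ 2 := by
    nlinarith [sq_abs p.1, sq_abs p.2, mul_nonneg (abs_nonneg p.1) (abs_nonneg p.2)]
  calc NN p ≤ Real.sqrt ((|p.1| + |p.2|) ^ 2) := Real.sqrt_le_sqrt h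
    _ = |p.1| + |p.2| := Real.sqrt_sq (by positivity)

lemma NN_ne {p : ℝ × ℝ} (hp : p ≠ 0) : NN p ≠ 0 := by
  have : p.1 ≠ 0 ∨ p.2 ≠ 0 := by
    by_contra hc
    push_neg at hc
    exact hp (Prod.ext hc.1 hc.2)
  have hpos : 0 < p.1 ^ 2 + p.2 ^ 2 := by
    rcases this with h | h
    · have h1 : 0 < p.1 ^ 2 := by positivity
      nlinarith [sq_nonneg p.2]
    · have h1 : 0 < p.2 ^ 2 := by positivity
      nlinarith [sq_nonneg p.1]
  exact ne_of_gt (Real.sqrt_pos.2 hpos)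

lemma hasFDerivAt_hh (p : ℝ × ℝ) : HasFDerivAt hh (hh' p) p := by
  by_cases hp : p = 0
  · subst hp
    have hNz : NN (0 : ℝ × ℝ) = 0 := by simp [NN]
    have h0 : hh' 0 = 0 := by
      simp [hh', c1, c2, hNz]
    rw [h0, hasFDerivAt_iff_isLittleO_nhds_zero]
    rw [Asymptotics.isLittleO_iff]
    intro c hc
    rw [Metric.eventually_nhds_iff]
    refine ⟨c / 4, by positivity, fun {q} hq => ?_⟩
    rw [dist_zero_right] at hq
    simp only [zero_add, hh, ContinuousLinearMap.zero_apply, sub_zero, hNz,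
      Prod.fst_zero, Prod.snd_zero, add_zero, mul_zero]
    have h1 : |q.1| ≤ ‖q‖ := by simpa using norm_fst_le q
    have h2 : |q.2| ≤ ‖q‖ := by simpa using norm_snd_le q
    have hN : NN q ≤ 2 * ‖q‖ := le_trans (NN_le q) (by linarith)
    have hs : |q.1 + q.2| ≤ 2 * ‖q‖ := le_trans (abs_add_le _ _) (by linarith)
    have hNn := NN_nonneg q
    calc ‖(q.1 + q.2) * NN q‖ = |q.1 + q.2| * NN q := by
          rw [Real.norm_eq_abs, abs_mul, abs_of_nonneg hNn]
      _ ≤ (2 * ‖q‖) * (2 * ‖q‖) := by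
          apply mul_le_mul hs hN hNn (by positivity)
      _ ≤ c * ‖q‖ := by nlinarith [norm_nonneg q]
  · have hx : p.1 ^ 2 + p.2 ^ 2 ≠ 0 := by
      intro h
      exact NN_ne hp (by simp [NN, h])
    have hq : HasFDerivAt (fun q : ℝ × ℝ => q.1 ^ 2 + q.2 ^ 2)
        ((2 * p.1 ^ 1) • ContinuousLinearMap.fst ℝ ℝ ℝ
          + (2 * p.2 ^ 1) • ContinuousLinearMap.snd ℝ ℝ ℝ) p := by
      have := ((hasFDerivAt_fst (𝕜 := ℝ) (p := p)).mul (hasFDerivAt_fst (𝕜 := ℝ) (p := p))).add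
        ((hasFDerivAt_snd (𝕜 := ℝ) (p := p)).mul (hasFDerivAt_snd (𝕜 := ℝ) (p := p)))
      have heqf : (fun q : ℝ × ℝ => q.1 ^ 2 + q.2 ^ 2) = fun q : ℝ × ℝ => q.1 * q.1 + q.2 * q.2 := by
        funext q; ring
      rw [heqf]
      refine this.congr_fderiv ?_
      refine ContinuousLinearMap.ext fun v => ?_
      simp [ContinuousLinearMap.add_apply, ContinuousLinearMap.smul_apply]
      ring
    have hN : HasFDerivAt NN
        ((1 / (2 * Real.sqrt (p.1 ^ 2 + p.2 ^ 2))) •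
          ((2 * p.1 ^ 1) • ContinuousLinearMap.fst ℝ ℝ ℝ
            + (2 * p.2 ^ 1) • ContinuousLinearMap.snd ℝ ℝ ℝ)) p := by
      have := (Real.hasDerivAt_sqrt hx).comp_hasFDerivAt p hq
      refine this.congr_fderiv ?_
      refine ContinuousLinearMap.ext fun v => ?_
      simp
    have hsum : HasFDerivAt (fun q : ℝ × ℝ => q.1 + q.2)
        (ContinuousLinearMap.fst ℝ ℝ ℝ + ContinuousLinearMap.snd ℝ ℝ ℝ) p :=
      (hasFDerivAt_fst (𝕜 := ℝ) (p := p)).add (hasFDerivAt_snd (𝕜 := ℝ) (p := p))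
    have hmul := hsum.mul hN
    have heq : (p.1 + p.2) • ((1 / (2 * Real.sqrt (p.1 ^ 2 + p.2 ^ 2))) •
          ((2 * p.1 ^ 1) • ContinuousLinearMap.fst ℝ ℝ ℝ
            + (2 * p.2 ^ 1) • ContinuousLinearMap.snd ℝ ℝ ℝ))
        + NN p • (ContinuousLinearMap.fst ℝ ℝ ℝ + ContinuousLinearMap.snd ℝ ℝ ℝ)
        = hh' p := by
      refine ContinuousLinearMap.ext fun v => ?_
      have hNne : NN p ≠ 0 := NN_ne hp
      simp only [hh', c1, c2, NN, ContinuousLinearMap.add_apply,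
        ContinuousLinearMap.smul_apply, ContinuousLinearMap.coe_fst',
        ContinuousLinearMap.coe_snd', smul_eq_mul]
      rw [NN] at hNne
      have h2 : Real.sqrt (p.1 ^ 2 + p.2 ^ 2) ^ 2 = p.1 ^ 2 + p.2 ^ 2 :=
        Real.sq_sqrt (by positivity)
      field_simp
      ring
    rw [← heq]
    exact hmul

lemma cont_c1 : Continuous c1 := by
  rw [continuous_iff_continuousAt]
  intro p
  by_cases hp : p = 0
  · subst hp
    have hc0 : c1 0 = 0 := by simp [c1, NN]
    unfold ContinuousAt
    rw [hc0]
    have hb : ∀ q : ℝ × ℝ, ‖c1 q‖ ≤ NN q + |q.1 + q.2| := by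
      intro q
      by_cases hN : NN q = 0
      · simp [c1, hN, abs_nonneg]
      · have hNpos : 0 < NN q := lt_of_le_of_ne (NN_nonneg q) (Ne.symm hN)
        have hdiv : |(q.1 + q.2) * q.1 / NN q| ≤ |q.1 + q.2| := by
          rw [abs_div, abs_of_nonneg (NN_nonneg q), div_le_iff₀ hNpos, abs_mul]
          exact mul_le_mul_of_nonneg_left (abs_fst_le q) (abs_nonneg _)
        calc ‖c1 q‖ ≤ |NN q| + |(q.1 + q.2) * q.1 / NN q| := abs_add_le _ _
          _ ≤ NN q + |q.1 + q.2| := by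
              rw [abs_of_nonneg (NN_nonneg q)]; linarith
    apply squeeze_zero_norm hb
    have : Continuous fun q : ℝ × ℝ => NN q + |q.1 + q.2| :=
      NN_cont.add (continuous_fst.add continuous_snd).abs
    have ht := this.tendsto (0 : ℝ × ℝ)
    simp only [Prod.fst_zero, Prod.snd_zero, add_zero, abs_zero] at ht
    simpa [NN] using ht
  · exact (NN_cont.continuousAt.add
      ((((continuous_fst.add continuous_snd).mul continuous_fst).continuousAt).div
        NN_cont.continuousAt (NN_ne hp)))

lemma cont_c2 : Continuous c2 := by
  rw [continuous_iff_continuousAt]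
  intro p
  by_cases hp : p = 0
  · subst hp
    have hc0 : c2 0 = 0 := by simp [c2, NN]
    unfold ContinuousAt
    rw [hc0]
    have hb : ∀ q : ℝ × ℝ, ‖c2 q‖ ≤ NN q + |q.1 + q.2| := by
      intro q
      by_cases hN : NN q = 0
      · simp [c2, hN, abs_nonneg]
      · have hNpos : 0 < NN q := lt_of_le_of_ne (NN_nonneg q) (Ne.symm hN)
        have hdiv : |(q.1 + q.2) * q.2 / NN q| ≤ |q.1 + q.2| := by
          rw [abs_div, abs_of_nonneg (NN_nonneg q), div_le_iff₀ hNpos, abs_mul]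
          exact mul_le_mul_of_nonneg_left (abs_snd_le q) (abs_nonneg _)
        calc ‖c2 q‖ ≤ |NN q| + |(q.1 + q.2) * q.2 / NN q| := abs_add_le _ _
          _ ≤ NN q + |q.1 + q.2| := by
              rw [abs_of_nonneg (NN_nonneg q)]; linarith
    apply squeeze_zero_norm hb
    have : Continuous fun q : ℝ × ℝ => NN q + |q.1 + q.2| :=
      NN_cont.add (continuous_fst.add continuous_snd).abs
    have ht := this.tendsto (0 : ℝ × ℝ)
    simp only [Prod.fst_zero, Prod.snd_zero, add_zero, abs_zero] at ht
    simpa [NN] using ht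
  · exact (NN_cont.continuousAt.add
      ((((continuous_fst.add continuous_snd).mul continuous_snd).continuousAt).div
        NN_cont.continuousAt (NN_ne hp)))

lemma cont_hh' : Continuous hh' :=
  (cont_c1.smul continuous_const).add (cont_c2.smul continuous_const)

lemma contDiff_hh : ContDiff ℝ 1 hh := by
  rw [contDiff_one_iff_fderiv]
  refine ⟨fun p => (hasFDerivAt_hh p).differentiableAt, ?_⟩
  have : fderiv ℝ hh = hh' := funext fun p => (hasFDerivAt_hh p).fderiv
  rw [this]
  exact cont_hh'

theorem FB_sq_contDiff :
    ContDiff ℝ 1 (fun p : ℝ × ℝ => (Real.sqrt (p.1 ^ 2 + p.2 ^ 2) - p.1 - p.2) ^ 2) := by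
  have heq : (fun p : ℝ × ℝ => (Real.sqrt (p.1 ^ 2 + p.2 ^ 2) - p.1 - p.2) ^ 2)
      = fun p : ℝ × ℝ => (p.1 ^ 2 + p.2 ^ 2) + (p.1 + p.2) ^ 2 - 2 * hh p := by
    funext p
    have h2 : Real.sqrt (p.1 ^ 2 + p.2 ^ 2) ^ 2 = p.1 ^ 2 + p.2 ^ 2 :=
      Real.sq_sqrt (by positivity)
    simp only [hh, NN]
    linear_combination h2
  rw [heq]
  exact (((contDiff_fst.pow 2).add (contDiff_snd.pow 2)).add
    ((contDiff_fst.add contDiff_snd).pow 2)).sub (contDiff_const.mul contDiff_hh)
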